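/- Let α ∈ (1,2), g_k^{(α)} = (−1)^k C(α,k), and define w_0^{(α)} = (α/2) g_0^{(α)} and w_k^{(α)} = (α/2) g_k^{(α)} + ((2−α)/2) g_{k−1}^{(α)} for k ≥ 1. Then w_0^{(α)} = α/2 > 0, w_1^{(α)} = (2 − α − α²)/2 < 0, w_k^{(α)} > 0 for all k ≥ 3, 1 > w_0^{(α)} > w_3^{(α)} > w_4^{(α)} > ⋯ > 0, and ∑_{k=0}^∞ w_k^{(α)} = 0. -/

import Mathlib

/-- The fractional binomial coefficients
`g_k^{(α)} = (−1)^k C(α,k) = ((−1)^k/k!) α(α−1)⋯(α−k+1)`. -/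
noncomputable def fracBinom (α : ℝ) (k : ℕ) : ℝ :=
  (-1) ^ k / (Nat.factorial k) * ∏ i ∈ Finset.range k, (α - i)

lemma fracBinom_zero (α : ℝ) : fracBinom α 0 = 1 := by
  simp [fracBinom]

lemma fracBinom_succ (α : ℝ) (k : ℕ) :
    fracBinom α (k + 1) = fracBinom α k * ((k - α) / (k + 1)) := by
  have hk : (Nat.factorial k : ℝ) ≠ 0 := Nat.cast_ne_zero.mpr (Nat.factorial_ne_zero k)
  have hk1 : (k : ℝ) + 1 ≠ 0 := by positivity
  simp only [fracBinom, Finset.prod_range_succ, Nat.factorial_succ, pow_succ]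
  push_cast
  field_simp
  ring

lemma fracBinom_one (α : ℝ) : fracBinom α 1 = -α := by
  rw [show (1:ℕ) = 0 + 1 from rfl, fracBinom_succ, fracBinom_zero]
  norm_num

lemma fracBinom_two (α : ℝ) : fracBinom α 2 = α * (α - 1) / 2 := by
  rw [show (2:ℕ) = 1 + 1 from rfl, fracBinom_succ, fracBinom_one]
  push_cast; ring

lemma fracBinom_pos {α : ℝ} (hα : α ∈ Set.Ioo (1 : ℝ) 2) :
    ∀ k : ℕ, 2 ≤ k → 0 < fracBinom α k := by
  obtain ⟨h1, h2⟩ := hα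
  intro k hk
  induction k, hk using Nat.le_induction with
  | base => rw [fracBinom_two]; nlinarith
  | succ n hn ih =>
    rw [fracBinom_succ]
    have hn' : (2:ℝ) ≤ (n:ℝ) := by exact_mod_cast hn
    have : 0 < ((n:ℝ) - α) / (n + 1) :=
      div_pos (by linarith) (by positivity)
    exact mul_pos ih this

lemma fracBinom_decreasing {α : ℝ} (hα : α ∈ Set.Ioo (1 : ℝ) 2) :
    ∀ k : ℕ, 2 ≤ k → fracBinom α (k + 1) < fracBinom α k := by
  intro k hk
  have hpos := fracBinom_pos hα k hk
  rw [fracBinom_succ]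
  have hk' : (2:ℝ) ≤ (k:ℝ) := by exact_mod_cast hk
  have : ((k:ℝ) - α) / (k + 1) < 1 := by
    rw [div_lt_one (by positivity)]; linarith [hα.1]
  nlinarith

lemma fracBinom_aux (α : ℝ) (n : ℕ) :
    fracBinom (α - 1) n * (-α) = fracBinom α n * ((n : ℝ) - α) := by
  induction n with
  | zero => simp [fracBinom_zero]
  | succ n ih =>
    rw [fracBinom_succ, fracBinom_succ]
    have hn1 : ((n:ℝ) + 1) ≠ 0 := by positivity
    push_cast
    field_simp
    linear_combination ((n:ℝ) + 1 - α) * ih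

lemma fracBinom_pascal (α : ℝ) (n : ℕ) :
    fracBinom α (n + 1) = fracBinom (α - 1) (n + 1) - fracBinom (α - 1) n := by
  rw [fracBinom_succ, fracBinom_succ]
  have hn1 : ((n:ℝ) + 1) ≠ 0 := by positivity
  have h := fracBinom_aux α n
  field_simp
  nlinarith [h]

lemma fracBinom_partial_sum (α : ℝ) (n : ℕ) :
    ∑ k ∈ Finset.range (n + 1), fracBinom α k = fracBinom (α - 1) n := by
  induction n with
  | zero => simp [fracBinom_zero]
  | succ n ih =>
    rw [Finset.sum_range_succ, ih, fracBinom_pascal]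
    ring

lemma fracBinom_small_bound {β : ℝ} (h0 : 0 < β) (h1 : β < 1) :
    ∀ n : ℕ, 1 ≤ n → fracBinom β n ≤ 0 ∧ -fracBinom β n ≤ 1 / n := by
  intro n hn
  induction n, hn using Nat.le_induction with
  | base =>
    rw [fracBinom_one]
    constructor <;> simp <;> linarith
  | succ n hn ih =>
    obtain ⟨ih1, ih2⟩ := ih
    rw [fracBinom_succ]
    have hn' : (1:ℝ) ≤ (n:ℝ) := by exact_mod_cast hn
    have hq0 : 0 ≤ ((n:ℝ) - β) / (n + 1) := by
      apply div_nonneg <;> linarith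
    constructor
    · exact mul_nonpos_of_nonpos_of_nonneg ih1 hq0
    · have hq1 : ((n:ℝ) - β) / ((n:ℝ) + 1) ≤ (n:ℝ) / ((n:ℝ) + 1) := by
        gcongr
        linarith
      push_cast
      calc -(fracBinom β n * (((n:ℝ) - β) / ((n:ℝ) + 1)))
          = (-fracBinom β n) * (((n:ℝ) - β) / ((n:ℝ) + 1)) := by ring
        _ ≤ (1 / (n:ℝ)) * ((n:ℝ) / ((n:ℝ) + 1)) := by
            apply mul_le_mul ih2 hq1 hq0 (by positivity)
        _ = 1 / ((n:ℝ) + 1) := by field_simp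

open Filter Topology in
lemma fracBinom_tendsto {β : ℝ} (h0 : 0 < β) (h1 : β < 1) :
    Tendsto (fun n : ℕ => fracBinom β n) atTop (nhds 0) := by
  have hb : ∀ᶠ n : ℕ in atTop, ‖fracBinom β n‖ ≤ 1 / n := by
    filter_upwards [Filter.eventually_atTop.mpr ⟨1, fun n hn => hn⟩] with n hn
    obtain ⟨h1', h2'⟩ := fracBinom_small_bound h0 h1 n hn
    rw [Real.norm_eq_abs, abs_le]
    refine ⟨by linarith, by linarith [one_div_nonneg.mpr (show (0:ℝ) ≤ n by positivity)]⟩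
  exact squeeze_zero_norm' hb tendsto_one_div_atTop_nhds_zero_nat

open Filter Topology in
lemma fracBinom_hasSum {α : ℝ} (hα : α ∈ Set.Ioo (1 : ℝ) 2) :
    HasSum (fun k : ℕ => fracBinom α k) 0 := by
  have h1 := hα.1
  have h2 := hα.2
  have hsum2 : Summable (fun k : ℕ => fracBinom α (k + 2)) := by
    apply summable_of_sum_range_le
      (c := α) (fun n => le_of_lt (fracBinom_pos hα (n + 2) (by omega)))
    intro n
    have hps := fracBinom_partial_sum α (n + 1)
    have hb : fracBinom (α - 1) (n + 1) ≤ 0 :=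
      (fracBinom_small_bound (by linarith) (by linarith) (n + 1) (by omega)).1
    have e : ∑ i ∈ Finset.range (2 + n), fracBinom α i
        = (fracBinom α 0 + fracBinom α 1) + ∑ i ∈ Finset.range n, fracBinom α (2 + i) := by
      rw [Finset.sum_range_add]
      simp [Finset.sum_range_succ]
    have e2 : (2 + n) = (n + 1) + 1 := by omega
    rw [e2, hps] at e
    have e3 : ∑ i ∈ Finset.range n, fracBinom α (i + 2)
        = ∑ i ∈ Finset.range n, fracBinom α (2 + i) := by
      apply Finset.sum_congr rfl
      intro i _
      rw [Nat.add_comm]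
    rw [e3]
    rw [fracBinom_zero, fracBinom_one] at e
    linarith
  have hsummable : Summable (fun k : ℕ => fracBinom α k) :=
    (summable_nat_add_iff 2).mp hsum2
  have hs := hsummable.hasSum
  have ht : Tendsto (fun n : ℕ => ∑ k ∈ Finset.range n, fracBinom α k) atTop (nhds 0) := by
    rw [← tendsto_add_atTop_iff_nat 1]
    have : (fun n : ℕ => ∑ k ∈ Finset.range (n + 1), fracBinom α k)
        = fun n : ℕ => fracBinom (α - 1) n := by
      funext n; exact fracBinom_partial_sum α n
    rw [this]
    exact fracBinom_tendsto (by linarith) (by linarith)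
  have := tendsto_nhds_unique hs.tendsto_sum_nat ht
  rwa [this] at hs

/-- The second-order Grünwald weights: `w_0 = (α/2) g_0`,
`w_k = (α/2) g_k + ((2−α)/2) g_{k−1}` for `k ≥ 1`. -/
noncomputable def grunwaldW (α : ℝ) : ℕ → ℝ
  | 0 => α / 2 * fracBinom α 0
  | (k + 1) => α / 2 * fracBinom α (k + 1) + (2 - α) / 2 * fracBinom α k

lemma grunwaldW_hasSum {α : ℝ} (hα : α ∈ Set.Ioo (1 : ℝ) 2) :
    HasSum (fun k : ℕ => grunwaldW α k) 0 := by
  have hg := fracBinom_hasSum hα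
  have hg1 : HasSum (fun k : ℕ => fracBinom α (k + 1)) (-1) := by
    rw [hasSum_nat_add_iff 1]
    simpa [fracBinom_zero] using hg
  have hw1 : HasSum (fun k : ℕ => grunwaldW α (k + 1)) (-(α / 2)) := by
    have h := (hg1.mul_left (α / 2)).add (hg.mul_left ((2 - α) / 2))
    have e : α / 2 * (-1) + (2 - α) / 2 * 0 = -(α / 2) := by ring
    rw [e] at h
    exact h
  have h := (hasSum_nat_add_iff (f := fun k : ℕ => grunwaldW α k) 1).mp hw1
  have e : (-(α / 2) + ∑ i ∈ Finset.range 1, grunwaldW α i) = 0 := by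
    simp [grunwaldW, fracBinom_zero]
  rwa [e] at h

/-- For `α ∈ (1,2)` the second-order Grünwald weights satisfy: `w_0 = α/2 > 0`,
`w_1 = (2 − α − α²)/2 < 0`, `w_k > 0` for `k ≥ 3`,
`1 > w_0 > w_3 > w_4 > ⋯ > 0`, and `∑_{k=0}^∞ w_k = 0`. -/
theorem grunwaldW_properties (α : ℝ) (hα : α ∈ Set.Ioo (1 : ℝ) 2) :
    grunwaldW α 0 = α / 2 ∧ 0 < grunwaldW α 0 ∧
    grunwaldW α 1 = (2 - α - α ^ 2) / 2 ∧ grunwaldW α 1 < 0 ∧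
    (∀ k : ℕ, 3 ≤ k → 0 < grunwaldW α k) ∧
    grunwaldW α 0 < 1 ∧
    grunwaldW α 3 < grunwaldW α 0 ∧
    (∀ k : ℕ, 3 ≤ k → grunwaldW α (k + 1) < grunwaldW α k) ∧
    HasSum (fun k : ℕ => grunwaldW α k) 0 := by
  have h1 := hα.1
  have h2 := hα.2
  have hw0 : grunwaldW α 0 = α / 2 := by simp [grunwaldW, fracBinom_zero]
  have hw1 : grunwaldW α 1 = (2 - α - α ^ 2) / 2 := by
    show α / 2 * fracBinom α 1 + (2 - α) / 2 * fracBinom α 0 = _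
    rw [fracBinom_one, fracBinom_zero]; ring
  refine ⟨hw0, by rw [hw0]; linarith, hw1, by rw [hw1]; nlinarith, ?_, by rw [hw0]; linarith,
    ?_, ?_, grunwaldW_hasSum hα⟩
  · intro k hk
    obtain ⟨m, rfl⟩ : ∃ m, k = m + 1 := ⟨k - 1, by omega⟩
    have hm : 2 ≤ m := by omega
    show 0 < α / 2 * fracBinom α (m + 1) + (2 - α) / 2 * fracBinom α m
    have hp1 := fracBinom_pos hα (m + 1) (by omega)
    have hp2 := fracBinom_pos hα m hm
    have : 0 < α / 2 * fracBinom α (m + 1) := by positivity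
    have : 0 < (2 - α) / 2 * fracBinom α m := by
      apply mul_pos _ hp2; linarith
    linarith
  · have h3 : fracBinom α 3 = α * (α - 1) * (2 - α) / 6 := by
      rw [show (3:ℕ) = 2 + 1 from rfl, fracBinom_succ, fracBinom_two]
      push_cast; ring
    rw [hw0]
    show α / 2 * fracBinom α 3 + (2 - α) / 2 * fracBinom α 2 < α / 2
    rw [h3, fracBinom_two]
    nlinarith [sq_nonneg (α - 1), sq_nonneg (2 - α), sq_nonneg α, mul_pos (sub_pos.mpr h1) (sub_pos.mpr h2)]
  · intro k hk
    obtain ⟨m, rfl⟩ : ∃ m, k = m + 1 := ⟨k - 1, by omega⟩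
    have hm : 2 ≤ m := by omega
    show α / 2 * fracBinom α (m + 1 + 1) + (2 - α) / 2 * fracBinom α (m + 1)
        < α / 2 * fracBinom α (m + 1) + (2 - α) / 2 * fracBinom α m
    have hd1 := fracBinom_decreasing hα (m + 1) (by omega)
    have hd2 := fracBinom_decreasing hα m hm
    have e1 : α / 2 * fracBinom α (m + 1 + 1) < α / 2 * fracBinom α (m + 1) := by
      apply mul_lt_mul_of_pos_left hd1; linarith
    have e2 : (2 - α) / 2 * fracBinom α (m + 1) < (2 - α) / 2 * fracBinom α m := by
      apply mul_lt_mul_of_pos_left hd2; linarith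
    linarith
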